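/- For every integer ℓ ≥ 0 and every β > 0, the second-kind Legendre function satisfies |Q_ℓ(cosh β)| ≤ √π · (Γ(ℓ+1)/Γ(ℓ+3/2)) · e^{−β(ℓ+1)} · (1 − e^{−2β})^{−1/2}. -/

import Mathlib

open MeasureTheory

/-- The Legendre polynomial of degree `l` (Rodrigues formula). -/
noncomputable def legendreP (l : ℕ) (x : ℝ) : ℝ :=
  ((2 : ℝ) ^ l * (Nat.factorial l : ℝ))⁻¹ *
    iteratedDeriv l (fun y : ℝ => (y ^ 2 - 1) ^ l) x

/-- The Legendre function of the second kind, for `z > 1`, via Neumann's formula. -/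
noncomputable def legendreQ (l : ℕ) (z : ℝ) : ℝ :=
  (1 / 2) * ∫ t in (-1 : ℝ)..1, legendreP l t / (z - t)

noncomputable def vFun (ε c : ℝ) : ℝ → ℝ := fun t => (1 - t ^ 2) / (2 * ε * (c - t))
noncomputable def vDer (ε c : ℝ) : ℝ → ℝ := fun t => ((t - ε) * (ε * t - 1)) / (2 * ε ^ 2 * (c - t) ^ 2)
noncomputable def gFun (l : ℕ) : ℝ → ℝ := fun u => u ^ l * (1 - u) ^ (-(1/2) : ℝ)

open Polynomial in
lemma iteratedDeriv_sq_sub_one (l : ℕ) : ∀ k, k ≤ l → ∃ p : Polynomial ℝ,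
    iteratedDeriv k (fun y : ℝ => (y ^ 2 - 1) ^ l) =
      fun y => (y ^ 2 - 1) ^ (l - k) * p.eval y := by
  intro k
  induction k with
  | zero => exact fun _ => ⟨1, by simp [iteratedDeriv_zero]⟩
  | succ k ih =>
    intro hk
    obtain ⟨p, hp⟩ := ih (Nat.le_of_succ_le hk)
    have hm : l - k = (l - (k + 1)) + 1 := by omega
    refine ⟨C ((2 : ℝ) * ((l - (k + 1) : ℕ) + 1)) * X * p + (X ^ 2 - 1) * derivative p, ?_⟩
    rw [iteratedDeriv_succ, hp]
    funext y
    set m := l - (k + 1) with hmdef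
    rw [hm]
    have h1 : HasDerivAt (fun y : ℝ => (y ^ 2 - 1) ^ (m + 1) * p.eval y)
        (((m + 1 : ℕ) * (y ^ 2 - 1) ^ m * (2 * y)) * p.eval y
          + (y ^ 2 - 1) ^ (m + 1) * p.derivative.eval y) y := by
      have hb : HasDerivAt (fun y : ℝ => y ^ 2 - 1) (2 * y) y := by
        simpa using (hasDerivAt_pow 2 y).sub_const 1
      exact ((hb.pow (m + 1)).congr_deriv (by push_cast; ring)).mul (p.hasDerivAt y)
    rw [h1.deriv]
    simp only [Polynomial.eval_add, Polynomial.eval_mul, Polynomial.eval_C, Polynomial.eval_X,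
      Polynomial.eval_sub, Polynomial.eval_pow, Polynomial.eval_one]
    push_cast
    ring


lemma differentiable_iteratedDeriv_sq_sub_one {l k : ℕ} (hk : k ≤ l) :
    Differentiable ℝ (iteratedDeriv k (fun y : ℝ => (y ^ 2 - 1) ^ l)) := by
  obtain ⟨p, hp⟩ := iteratedDeriv_sq_sub_one l k hk
  rw [hp]
  exact fun x => (((differentiable_id.pow 2).sub_const 1).pow _).mul
    (Polynomial.differentiable p) |>.differentiableAt

lemma boundary_iteratedDeriv_sq_sub_one {l k : ℕ} (hk : k < l) {y : ℝ} (hy : y ^ 2 = 1) :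
    iteratedDeriv k (fun y : ℝ => (y ^ 2 - 1) ^ l) y = 0 := by
  obtain ⟨p, hp⟩ := iteratedDeriv_sq_sub_one l k hk.le
  rw [hp]
  have : l - k ≠ 0 := by omega
  simp [hy, zero_pow this]

lemma hasDerivAt_iteratedDeriv_sq_sub_one {l k : ℕ} (hk : k < l) (x : ℝ) :
    HasDerivAt (iteratedDeriv k (fun y : ℝ => (y ^ 2 - 1) ^ l))
      (iteratedDeriv (k + 1) (fun y : ℝ => (y ^ 2 - 1) ^ l) x) x := by
  rw [iteratedDeriv_succ]
  exact ((differentiable_iteratedDeriv_sq_sub_one hk.le) x).hasDerivAt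

lemma hasDerivAt_inv_pow {z x : ℝ} (hzx : z - x ≠ 0) (k : ℕ) :
    HasDerivAt (fun t : ℝ => ((z - t) ^ (k + 1))⁻¹)
      (((k : ℝ) + 1) * ((z - x) ^ (k + 2))⁻¹) x := by
  have hlin : HasDerivAt (fun t : ℝ => z - t) (-1) x := by
    simpa using (hasDerivAt_id x).const_sub z
  have hpow := hlin.pow (k + 1)
  have h0 : (z - x) ^ (k + 1) ≠ 0 := pow_ne_zero _ hzx
  have := hpow.inv h0
  refine this.congr_deriv ?_
  simp only [Pi.pow_apply, Nat.add_sub_cancel]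
  field_simp
  push_cast
  ring


lemma zsub_ne {z t : ℝ} (hz : 1 < z) (ht : t ∈ Set.uIcc (-1 : ℝ) 1) : z - t ≠ 0 := by
  rw [Set.uIcc_of_le (by norm_num)] at ht
  nlinarith [ht.1, ht.2]

lemma contOn_inv_pow {z : ℝ} (hz : 1 < z) (k : ℕ) :
    ContinuousOn (fun t : ℝ => ((z - t) ^ (k + 1))⁻¹) (Set.uIcc (-1 : ℝ) 1) :=
  ContinuousOn.inv₀ (by fun_prop) fun t ht => pow_ne_zero _ (zsub_ne hz ht)

lemma ibp_aux (l : ℕ) {z : ℝ} (hz : 1 < z) : ∀ k, k ≤ l →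
    (∫ t in (-1:ℝ)..1, iteratedDeriv l (fun y : ℝ => (y ^ 2 - 1) ^ l) t * (z - t)⁻¹) =
      (-1 : ℝ) ^ k * (k.factorial : ℝ) *
        ∫ t in (-1:ℝ)..1,
          iteratedDeriv (l - k) (fun y : ℝ => (y ^ 2 - 1) ^ l) t * ((z - t) ^ (k + 1))⁻¹ := by
  intro k
  induction k with
  | zero => simp
  | succ k ih =>
    intro hk
    rw [ih (Nat.le_of_succ_le hk)]
    have hlk : l - k = (l - (k + 1)) + 1 := by omega
    have hblt : l - (k + 1) < l := by omega
    have hibp := intervalIntegral.integral_mul_deriv_eq_deriv_mul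
        (a := (-1:ℝ)) (b := 1)
        (u := fun t => ((z - t) ^ (k + 1))⁻¹)
        (u' := fun t => ((k : ℝ) + 1) * ((z - t) ^ (k + 2))⁻¹)
        (v := iteratedDeriv (l - (k+1)) (fun y : ℝ => (y ^ 2 - 1) ^ l))
        (v' := iteratedDeriv (l - (k+1) + 1) (fun y : ℝ => (y ^ 2 - 1) ^ l))
        (fun x hx => hasDerivAt_inv_pow (zsub_ne hz hx) k)
        (fun x hx => hasDerivAt_iteratedDeriv_sq_sub_one hblt x)
        ((continuousOn_const.mul (contOn_inv_pow hz (k+1))).intervalIntegrable)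
        ((differentiable_iteratedDeriv_sq_sub_one (by omega : l - (k+1) + 1 ≤ l)).continuous.intervalIntegrable _ _)
    rw [boundary_iteratedDeriv_sq_sub_one hblt (by norm_num),
        boundary_iteratedDeriv_sq_sub_one hblt (by norm_num)] at hibp
    simp only [mul_zero, zero_sub, zero_sub] at hibp
    have hcomm : (∫ t in (-1:ℝ)..1,
        iteratedDeriv (l - k) (fun y : ℝ => (y ^ 2 - 1) ^ l) t * ((z - t) ^ (k + 1))⁻¹) =
        ∫ t in (-1:ℝ)..1, ((z - t) ^ (k + 1))⁻¹ *
          iteratedDeriv (l - (k+1) + 1) (fun y : ℝ => (y ^ 2 - 1) ^ l) t := by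
      rw [← hlk]; congr 1; funext t; ring
    rw [hcomm, hibp]
    have hpull : (∫ t in (-1:ℝ)..1, ((k : ℝ) + 1) * ((z - t) ^ (k + 2))⁻¹ *
          iteratedDeriv (l - (k+1)) (fun y : ℝ => (y ^ 2 - 1) ^ l) t) =
        ((k : ℝ) + 1) * ∫ t in (-1:ℝ)..1,
          iteratedDeriv (l - (k+1)) (fun y : ℝ => (y ^ 2 - 1) ^ l) t * ((z - t) ^ (k + 1 + 1))⁻¹ := by
      rw [← intervalIntegral.integral_const_mul]
      congr 1; funext t; ring
    rw [hpull]
    rw [Nat.factorial_succ]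
    push_cast
    ring


lemma legendreQ_eq (l : ℕ) {z : ℝ} (hz : 1 < z) :
    legendreQ l z = ((2 : ℝ) ^ (l + 1))⁻¹ *
      ∫ t in (-1:ℝ)..1, (1 - t ^ 2) ^ l * ((z - t) ^ (l + 1))⁻¹ := by
  have h1 : (∫ t in (-1:ℝ)..1, legendreP l t / (z - t)) =
      ((2 : ℝ) ^ l * (Nat.factorial l : ℝ))⁻¹ *
        ∫ t in (-1:ℝ)..1, iteratedDeriv l (fun y : ℝ => (y ^ 2 - 1) ^ l) t * (z - t)⁻¹ := by
    rw [← intervalIntegral.integral_const_mul]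
    congr 1; funext t
    rw [legendreP, div_eq_mul_inv]; ring
  have h2 := ibp_aux l hz l le_rfl
  simp only [Nat.sub_self, iteratedDeriv_zero] at h2
  have h3 : (∫ t in (-1:ℝ)..1, (t ^ 2 - 1) ^ l * ((z - t) ^ (l + 1))⁻¹) =
      (-1 : ℝ) ^ l * ∫ t in (-1:ℝ)..1, (1 - t ^ 2) ^ l * ((z - t) ^ (l + 1))⁻¹ := by
    rw [← intervalIntegral.integral_const_mul]
    congr 1; funext t
    rw [show ((t:ℝ) ^ 2 - 1) ^ l = (-1 : ℝ) ^ l * (1 - t ^ 2) ^ l by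
      rw [← neg_one_mul, ← mul_pow]; ring_nf, mul_assoc]
  rw [legendreQ, h1, h2, h3]
  have hfac : (Nat.factorial l : ℝ) ≠ 0 := Nat.cast_ne_zero.mpr (Nat.factorial_ne_zero l)
  have hsq : ((-1 : ℝ) ^ l) * ((-1 : ℝ) ^ l) = 1 := by
    rw [← mul_pow]; norm_num
  set I := ∫ t in (-1:ℝ)..1, (1 - t ^ 2) ^ l * ((z - t) ^ (l + 1))⁻¹ with hI
  rw [show (1/2 : ℝ) * ((2 ^ l * (Nat.factorial l : ℝ))⁻¹ *
      ((-1) ^ l * (Nat.factorial l : ℝ) * ((-1 : ℝ) ^ l * I)))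
    = ((-1 : ℝ)^l * (-1 : ℝ)^l) * ((1/2) * ((2 ^ l * (Nat.factorial l : ℝ))⁻¹ *
        (Nat.factorial l : ℝ)) * I) by ring, hsq]
  rw [show ((2:ℝ) ^ l * (Nat.factorial l : ℝ))⁻¹ * (Nat.factorial l : ℝ) = ((2:ℝ)^l)⁻¹ by
    field_simp]
  rw [pow_succ, mul_inv]
  ring


lemma beta_val (l : ℕ) :
    (∫ u in (0:ℝ)..1, u ^ l * (1 - u) ^ (-(1/2) : ℝ)) =
      Real.Gamma ((l:ℝ) + 1) * Real.sqrt Real.pi / Real.Gamma ((l:ℝ) + 3/2) := by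
  have key := Complex.Gamma_mul_Gamma_eq_betaIntegral (s := (l:ℂ) + 1) (t := 1/2)
    (by simp; positivity) (by norm_num)
  have hbeta : Complex.betaIntegral ((l:ℂ) + 1) (1/2) =
      ((∫ u in (0:ℝ)..1, u ^ l * (1 - u) ^ (-(1/2) : ℝ) : ℝ) : ℂ) := by
    rw [Complex.betaIntegral, ← intervalIntegral.integral_ofReal]
    refine intervalIntegral.integral_congr fun x hx => ?_
    rw [Set.uIcc_of_le (by norm_num)] at hx
    have hx0 : (0:ℝ) ≤ x := hx.1
    have hx1 : (0:ℝ) ≤ 1 - x := by linarith [hx.2]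
    push_cast
    rw [show (l:ℂ) + 1 - 1 = (l:ℂ) by ring, Complex.cpow_natCast,
      show (1/2 : ℂ) - 1 = ((-(1/2) : ℝ) : ℂ) by norm_num,
      show (1 - (x:ℂ)) = ((1 - x : ℝ) : ℂ) by push_cast; ring,
      ← Complex.ofReal_cpow hx1]
  rw [hbeta] at key
  have hG1 : Complex.Gamma ((l:ℂ) + 1) = ((Real.Gamma ((l:ℝ) + 1) : ℝ) : ℂ) := by
    rw [← Complex.Gamma_ofReal]; push_cast; ring_nf
  have hG2 : Complex.Gamma (1/2 : ℂ) = ((Real.sqrt Real.pi : ℝ) : ℂ) := by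
    rw [show (1/2 : ℂ) = ((1/2 : ℝ) : ℂ) by norm_num, Complex.Gamma_ofReal,
      Real.Gamma_one_half_eq]
  have hG3 : Complex.Gamma ((l:ℂ) + 1 + 1/2) = ((Real.Gamma ((l:ℝ) + 3/2) : ℝ) : ℂ) := by
    rw [show ((l:ℂ) + 1 + 1/2) = (((l:ℝ) + 3/2 : ℝ) : ℂ) by push_cast; ring,
      Complex.Gamma_ofReal]
  rw [hG1, hG2, hG3, ← Complex.ofReal_mul, ← Complex.ofReal_mul, Complex.ofReal_inj] at key
  have hpos : 0 < Real.Gamma ((l:ℝ) + 3/2) := Real.Gamma_pos_of_pos (by positivity)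
  rw [key, mul_div_cancel_left₀ _ hpos.ne']


lemma rpow_neg_half_eq {x : ℝ} (hx : 0 ≤ x) :
    x ^ (-(1/2) : ℝ) = (Real.sqrt x)⁻¹ := by
  rw [Real.rpow_neg hx, Real.sqrt_eq_rpow]

set_option maxHeartbeats 800000 in
lemma pointwise_bound (l : ℕ) {ε c t : ℝ} (hε : 0 < ε) (hε1 : ε < 1)
    (hc : 2 * ε * c = 1 + ε ^ 2) (ht1 : -1 < t) (ht2 : t < 1) (htε : t ≠ ε) :
    (1 - t ^ 2) ^ l * ((c - t) ^ (l + 1))⁻¹ ≤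
      2 ^ l * ε ^ (l + 1) * (Real.sqrt (1 - ε ^ 2))⁻¹ *
        (|((t - ε) * (ε * t - 1)) / (2 * ε ^ 2 * (c - t) ^ 2)| *
          (((1 - t ^ 2) / (2 * ε * (c - t))) ^ l *
            (1 - (1 - t ^ 2) / (2 * ε * (c - t))) ^ (-(1/2) : ℝ))) := by
  have hc1 : 1 < c := by nlinarith [sq_nonneg (1 - ε)]
  have hd : 0 < c - t := by linarith
  have hd' : (c - t) ≠ 0 := hd.ne'
  have htεne : t - ε ≠ 0 := sub_ne_zero.mpr htε
  have htεsq : 0 < (t - ε) ^ 2 := by positivity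
  obtain ⟨w, hw⟩ : ∃ w, (1 - t ^ 2) / (2 * ε * (c - t)) = w := ⟨_, rfl⟩
  obtain ⟨D, hD⟩ : ∃ D, ((t - ε) * (ε * t - 1)) / (2 * ε ^ 2 * (c - t) ^ 2) = D := ⟨_, rfl⟩
  rw [hw, hD]
  have hw_pos : 0 < w := by
    rw [← hw]; apply div_pos (by nlinarith) (by positivity)
  have hP : 0 < 1 + ε ^ 2 - 2 * ε * t := by nlinarith
  have h2ed : 2 * ε * (c - t) = 1 + ε ^ 2 - 2 * ε * t := by ring_nf; linarith [hc]
  have h1w : 1 - w = (t - ε) ^ 2 / (1 + ε ^ 2 - 2 * ε * t) := by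
    rw [← hw, ← h2ed]
    field_simp
    nlinarith [hc]
  have h1w_pos : 0 < 1 - w := by rw [h1w]; positivity
  have hεt1 : ε * t - 1 < 0 := by nlinarith
  have hD_ne : D ≠ 0 := by
    rw [← hD]
    exact div_ne_zero (mul_ne_zero htεne (ne_of_lt hεt1)) (by positivity)
  have hε2 : (0:ℝ) < 1 - ε ^ 2 := by nlinarith
  -- squared core inequality
  have key : (1 - ε^2) * (t-ε)^2 * (1 + ε^2 - 2*ε*t)^2 ≤
      (t-ε)^2 * (ε*t-1)^2 * (1 + ε^2 - 2*ε*t) := by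
    nlinarith [mul_nonneg (mul_nonneg hP.le (sq_nonneg (t - ε))) (sq_nonneg (ε * (t - ε)))]
  have hRHS : (ε * (c - t) * |D|) ^ 2 = (t-ε)^2 * (ε*t-1)^2 / (1 + ε^2 - 2*ε*t)^2 := by
    rw [mul_pow, sq_abs, ← hD, div_pow, ← h2ed]
    field_simp
  have hsq : (1 - ε ^ 2) * (1 - w) ≤ (ε * (c - t) * |D|) ^ 2 := by
    rw [h1w, hRHS, ← mul_div_assoc, div_le_div_iff₀ hP (by positivity)]
    nlinarith [key]
  -- square-rooted core inequality
  have hcore : Real.sqrt (1 - ε ^ 2) * Real.sqrt (1 - w) ≤ ε * (c - t) * |D| := by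
    rw [← Real.sqrt_mul hε2.le]
    have hR : 0 ≤ ε * (c - t) * |D| := by positivity
    rw [← Real.sqrt_sq hR]
    exact Real.sqrt_le_sqrt hsq
  have hs1 : 0 < Real.sqrt (1 - ε ^ 2) := Real.sqrt_pos.mpr hε2
  have hs2 : 0 < Real.sqrt (1 - w) := Real.sqrt_pos.mpr h1w_pos
  have habsD : 0 < |D| := abs_pos.mpr hD_ne
  have hfin : (c - t)⁻¹ ≤ ε * |D| * ((Real.sqrt (1 - ε ^ 2))⁻¹ * (Real.sqrt (1 - w))⁻¹) := by
    rw [← mul_inv, ← div_eq_mul_inv, inv_eq_one_div,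
      div_le_div_iff₀ hd (by positivity), one_mul,
      show ε * |D| * (c - t) = ε * (c - t) * |D| by ring]
    exact hcore
  -- rewrite LHS
  have hX : (1 - t ^ 2) ^ l = 2 ^ l * ε ^ l * (c - t) ^ l * w ^ l := by
    have : 1 - t ^ 2 = 2 * ε * (c - t) * w := by
      rw [← hw]; field_simp
    rw [this, mul_pow, mul_pow, mul_pow]
  have hLHS : (1 - t ^ 2) ^ l * ((c - t) ^ (l + 1))⁻¹
      = 2 ^ l * ε ^ l * w ^ l * (c - t)⁻¹ := by
    rw [hX, pow_succ, mul_inv]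
    field_simp [pow_ne_zero l hd']
  rw [hLHS, rpow_neg_half_eq h1w_pos.le]
  calc 2 ^ l * ε ^ l * w ^ l * (c - t)⁻¹
      ≤ 2 ^ l * ε ^ l * w ^ l * (ε * |D| * ((Real.sqrt (1 - ε ^ 2))⁻¹ *
          (Real.sqrt (1 - w))⁻¹)) := by
        apply mul_le_mul_of_nonneg_left hfin (by positivity)
    _ = 2 ^ l * ε ^ (l + 1) * (Real.sqrt (1 - ε ^ 2))⁻¹ *
          (|D| * (w ^ l * (Real.sqrt (1 - w))⁻¹)) := by
        rw [pow_succ]; ring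


lemma hasDerivAt_v {ε c : ℝ} (hε : ε ≠ 0) (hc : 2 * ε * c = 1 + ε ^ 2) {t : ℝ}
    (hct : c - t ≠ 0) : HasDerivAt (vFun ε c) (vDer ε c t) t := by
  unfold vFun vDer
  have hnum : HasDerivAt (fun t : ℝ => 1 - t ^ 2) (-(2 * t)) t := by
    simpa using (hasDerivAt_pow 2 t).const_sub 1
  have hden : HasDerivAt (fun t : ℝ => 2 * ε * (c - t)) (2 * ε * (-1)) t :=
    ((hasDerivAt_id t).const_sub c).const_mul (2 * ε)
  have hden_ne : 2 * ε * (c - t) ≠ 0 := by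
    exact mul_ne_zero (by simpa using hε) hct
  have h := hnum.div hden hden_ne
  refine h.congr_deriv ?_
  have hnum_id : (t - ε) * (ε * t - 1) = ε * (t ^ 2 - 2 * c * t + 1) := by
    linear_combination t * hc
  rw [hnum_id]
  field_simp
  ring

lemma one_sub_v {ε c : ℝ} (hε : ε ≠ 0) (hc : 2 * ε * c = 1 + ε ^ 2) {t : ℝ}
    (hct : c - t ≠ 0) :
    1 - (1 - t ^ 2) / (2 * ε * (c - t)) = (t - ε) ^ 2 / (2 * ε * (c - t)) := by
  field_simp
  linear_combination hc

lemma g_integrableOn (l : ℕ) :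
    IntegrableOn (gFun l) (Set.Ioo (0:ℝ) 1) := by
  unfold gFun
  have i1 : IntervalIntegrable (fun u : ℝ => (1 - u) ^ (-(1/2) : ℝ)) volume 0 1 := by
    have := (intervalIntegral.intervalIntegrable_rpow' (a := 1) (b := 0)
      (r := -(1/2)) (by norm_num)).comp_sub_left 1
    simpa using this
  have i2 : IntervalIntegrable (fun u : ℝ => (1 - u) ^ (-(1/2) : ℝ) * u ^ l) volume 0 1 :=
    i1.mul_continuousOn (Continuous.continuousOn (by fun_prop))
  have i3 : IntegrableOn (fun u : ℝ => (1 - u) ^ (-(1/2) : ℝ) * u ^ l) (Set.Ioc (0:ℝ) 1) := by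
    rwa [intervalIntegrable_iff_integrableOn_Ioc_of_le (by norm_num)] at i2
  exact ((i3.mono_set Set.Ioo_subset_Ioc_self).congr_fun
    (fun x hx => by ring) measurableSet_Ioo)


lemma branch_left (l : ℕ) {ε c : ℝ} (hε : 0 < ε) (hε1 : ε < 1)
    (hc : 2 * ε * c = 1 + ε ^ 2) :
    (∫ t in Set.Ioo (-1:ℝ) ε, (1 - t ^ 2) ^ l * ((c - t) ^ (l + 1))⁻¹) ≤
      2 ^ l * ε ^ (l + 1) * (Real.sqrt (1 - ε ^ 2))⁻¹ *
        ∫ u in Set.Ioo (0:ℝ) 1, gFun l u := by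
  have hc1 : 1 < c := by nlinarith [sq_nonneg (1 - ε)]
  have hctne : ∀ t : ℝ, t ≤ 1 → c - t ≠ 0 := fun t ht => ne_of_gt (by linarith)
  have hdv : ∀ t ∈ Set.Ioo (-1:ℝ) ε, HasDerivWithinAt (vFun ε c) (vDer ε c t)
      (Set.Ioo (-1:ℝ) ε) t := fun t ht =>
    (hasDerivAt_v hε.ne' hc (hctne t (by linarith [ht.2]))).hasDerivWithinAt
  have hcont : ContinuousOn (vFun ε c) (Set.Icc (-1:ℝ) ε) := fun t ht =>
    ((hasDerivAt_v hε.ne' hc (hctne t (by linarith [ht.2]))).continuousAt).continuousWithinAt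
  have hmono : StrictMonoOn (vFun ε c) (Set.Icc (-1:ℝ) ε) := by
    apply strictMonoOn_of_deriv_pos (convex_Icc _ _) hcont
    intro t ht
    rw [interior_Icc] at ht
    rw [(hasDerivAt_v hε.ne' hc (hctne t (by linarith [ht.2]))).deriv]
    have h1 : t - ε < 0 := by linarith [ht.2]
    have h2 : ε * t - 1 < 0 := by nlinarith [ht.2]
    have hct : 0 < c - t := by linarith [ht.2]
    exact div_pos (by nlinarith) (mul_pos (by positivity) (pow_pos hct 2))
  have hinj : Set.InjOn (vFun ε c) (Set.Ioo (-1:ℝ) ε) :=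
    (hmono.mono Set.Ioo_subset_Icc_self).injOn
  have hva : vFun ε c (-1) = 0 := by simp [vFun]
  have hvb : vFun ε c ε = 1 := by
    rw [vFun, div_eq_one_iff_eq (by
      exact mul_ne_zero (by positivity) (hctne ε hε1.le))]
    nlinarith [hc]
  have himg : vFun ε c '' Set.Ioo (-1:ℝ) ε = Set.Ioo 0 1 := by
    apply Set.Subset.antisymm
    · rintro x ⟨t, ht, rfl⟩
      have hct : 0 < c - t := by linarith [ht.2]
      constructor
      · exact div_pos (by nlinarith [ht.1, ht.2]) (by positivity)
      · have h1v := one_sub_v hε.ne' hc (hctne t (by linarith [ht.2]))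
        have htne : t - ε ≠ 0 := sub_ne_zero.mpr (ne_of_lt ht.2)
        have : 0 < (t - ε) ^ 2 / (2 * ε * (c - t)) := div_pos (by positivity) (by positivity)
        have : 0 < 1 - vFun ε c t := by rw [vFun]; simpa [h1v] using this
        linarith
    · have h := intermediate_value_Ioo (by linarith : (-1:ℝ) ≤ ε) hcont
      rw [hva, hvb] at h
      exact h
  have hgi : IntegrableOn (gFun l) (Set.Ioo (0:ℝ) 1) := g_integrableOn l
  have hcv : (∫ u in Set.Ioo (0:ℝ) 1, gFun l u) =
      ∫ t in Set.Ioo (-1:ℝ) ε, |vDer ε c t| • gFun l (vFun ε c t) := by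
    rw [← himg]
    exact integral_image_eq_integral_abs_deriv_smul measurableSet_Ioo hdv hinj (gFun l)
  have hmaj_int : IntegrableOn (fun t => |vDer ε c t| • gFun l (vFun ε c t))
      (Set.Ioo (-1:ℝ) ε) := by
    rw [← integrableOn_image_iff_integrableOn_abs_deriv_smul measurableSet_Ioo hdv hinj (gFun l),
      himg]
    exact hgi
  have hFcont : ContinuousOn (fun t : ℝ => (1 - t ^ 2) ^ l * ((c - t) ^ (l + 1))⁻¹)
      (Set.Icc (-1:ℝ) ε) := by
    apply ContinuousOn.mul (by fun_prop)
    exact ContinuousOn.inv₀ (by fun_prop)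
      (fun t ht => pow_ne_zero _ (hctne t (by linarith [ht.2])))
  have hF_int : IntegrableOn (fun t : ℝ => (1 - t ^ 2) ^ l * ((c - t) ^ (l + 1))⁻¹)
      (Set.Ioo (-1:ℝ) ε) :=
    (hFcont.integrableOn_compact isCompact_Icc).mono_set Set.Ioo_subset_Icc_self
  calc (∫ t in Set.Ioo (-1:ℝ) ε, (1 - t ^ 2) ^ l * ((c - t) ^ (l + 1))⁻¹)
      ≤ ∫ t in Set.Ioo (-1:ℝ) ε, 2 ^ l * ε ^ (l + 1) * (Real.sqrt (1 - ε ^ 2))⁻¹ *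
          (|vDer ε c t| • gFun l (vFun ε c t)) := by
        apply setIntegral_mono_on hF_int (hmaj_int.const_mul _) measurableSet_Ioo
        intro t ht
        have hpb := pointwise_bound l hε hε1 hc ht.1 (by linarith [ht.2]) (ne_of_lt ht.2)
        simpa [vDer, vFun, gFun, smul_eq_mul, mul_assoc] using hpb
    _ = 2 ^ l * ε ^ (l + 1) * (Real.sqrt (1 - ε ^ 2))⁻¹ *
          ∫ t in Set.Ioo (-1:ℝ) ε, |vDer ε c t| • gFun l (vFun ε c t) :=
        integral_const_mul _ _
    _ = 2 ^ l * ε ^ (l + 1) * (Real.sqrt (1 - ε ^ 2))⁻¹ *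
          ∫ u in Set.Ioo (0:ℝ) 1, gFun l u := by rw [← hcv]

lemma branch_right (l : ℕ) {ε c : ℝ} (hε : 0 < ε) (hε1 : ε < 1)
    (hc : 2 * ε * c = 1 + ε ^ 2) :
    (∫ t in Set.Ioo ε (1:ℝ), (1 - t ^ 2) ^ l * ((c - t) ^ (l + 1))⁻¹) ≤
      2 ^ l * ε ^ (l + 1) * (Real.sqrt (1 - ε ^ 2))⁻¹ *
        ∫ u in Set.Ioo (0:ℝ) 1, gFun l u := by
  have hc1 : 1 < c := by nlinarith [sq_nonneg (1 - ε)]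
  have hctne : ∀ t : ℝ, t ≤ 1 → c - t ≠ 0 := fun t ht => ne_of_gt (by linarith)
  have hdv : ∀ t ∈ Set.Ioo ε (1:ℝ), HasDerivWithinAt (vFun ε c) (vDer ε c t)
      (Set.Ioo ε (1:ℝ)) t := fun t ht =>
    (hasDerivAt_v hε.ne' hc (hctne t ht.2.le)).hasDerivWithinAt
  have hcont : ContinuousOn (vFun ε c) (Set.Icc ε (1:ℝ)) := fun t ht =>
    ((hasDerivAt_v hε.ne' hc (hctne t ht.2)).continuousAt).continuousWithinAt
  have hanti : StrictAntiOn (vFun ε c) (Set.Icc ε (1:ℝ)) := by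
    apply strictAntiOn_of_deriv_neg (convex_Icc _ _) hcont
    intro t ht
    rw [interior_Icc] at ht
    rw [(hasDerivAt_v hε.ne' hc (hctne t ht.2.le)).deriv]
    have h1 : 0 < t - ε := by linarith [ht.1]
    have h2 : ε * t - 1 < 0 := by nlinarith [ht.2]
    have hct : 0 < c - t := by linarith [ht.2]
    exact div_neg_of_neg_of_pos (by nlinarith) (mul_pos (by positivity) (pow_pos hct 2))
  have hinj : Set.InjOn (vFun ε c) (Set.Ioo ε (1:ℝ)) :=
    (hanti.mono Set.Ioo_subset_Icc_self).injOn
  have hva : vFun ε c 1 = 0 := by simp [vFun]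
  have hvb : vFun ε c ε = 1 := by
    rw [vFun, div_eq_one_iff_eq (by
      exact mul_ne_zero (by positivity) (hctne ε hε1.le))]
    nlinarith [hc]
  have himg : vFun ε c '' Set.Ioo ε (1:ℝ) = Set.Ioo 0 1 := by
    apply Set.Subset.antisymm
    · rintro x ⟨t, ht, rfl⟩
      have hct : 0 < c - t := by linarith [ht.2]
      constructor
      · exact div_pos (by nlinarith [ht.1, ht.2]) (by positivity)
      · have h1v := one_sub_v hε.ne' hc (hctne t ht.2.le)
        have htne : t - ε ≠ 0 := sub_ne_zero.mpr (ne_of_gt ht.1)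
        have : 0 < (t - ε) ^ 2 / (2 * ε * (c - t)) := div_pos (by positivity) (by positivity)
        have : 0 < 1 - vFun ε c t := by rw [vFun]; simpa [h1v] using this
        linarith
    · have h := intermediate_value_Ioo' hε1.le hcont
      rw [hva, hvb] at h
      exact h
  have hgi : IntegrableOn (gFun l) (Set.Ioo (0:ℝ) 1) := g_integrableOn l
  have hcv : (∫ u in Set.Ioo (0:ℝ) 1, gFun l u) =
      ∫ t in Set.Ioo ε (1:ℝ), |vDer ε c t| • gFun l (vFun ε c t) := by
    rw [← himg]
    exact integral_image_eq_integral_abs_deriv_smul measurableSet_Ioo hdv hinj (gFun l)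
  have hmaj_int : IntegrableOn (fun t => |vDer ε c t| • gFun l (vFun ε c t))
      (Set.Ioo ε (1:ℝ)) := by
    rw [← integrableOn_image_iff_integrableOn_abs_deriv_smul measurableSet_Ioo hdv hinj (gFun l),
      himg]
    exact hgi
  have hFcont : ContinuousOn (fun t : ℝ => (1 - t ^ 2) ^ l * ((c - t) ^ (l + 1))⁻¹)
      (Set.Icc ε (1:ℝ)) := by
    apply ContinuousOn.mul (by fun_prop)
    exact ContinuousOn.inv₀ (by fun_prop) (fun t ht => pow_ne_zero _ (hctne t ht.2))
  have hF_int : IntegrableOn (fun t : ℝ => (1 - t ^ 2) ^ l * ((c - t) ^ (l + 1))⁻¹)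
      (Set.Ioo ε (1:ℝ)) :=
    (hFcont.integrableOn_compact isCompact_Icc).mono_set Set.Ioo_subset_Icc_self
  calc (∫ t in Set.Ioo ε (1:ℝ), (1 - t ^ 2) ^ l * ((c - t) ^ (l + 1))⁻¹)
      ≤ ∫ t in Set.Ioo ε (1:ℝ), 2 ^ l * ε ^ (l + 1) * (Real.sqrt (1 - ε ^ 2))⁻¹ *
          (|vDer ε c t| • gFun l (vFun ε c t)) := by
        apply setIntegral_mono_on hF_int (hmaj_int.const_mul _) measurableSet_Ioo
        intro t ht
        have hpb := pointwise_bound l hε hε1 hc (by linarith [ht.1]) ht.2 (ne_of_gt ht.1)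
        simpa [vDer, vFun, gFun, smul_eq_mul, mul_assoc] using hpb
    _ = 2 ^ l * ε ^ (l + 1) * (Real.sqrt (1 - ε ^ 2))⁻¹ *
          ∫ t in Set.Ioo ε (1:ℝ), |vDer ε c t| • gFun l (vFun ε c t) :=
        integral_const_mul _ _
    _ = 2 ^ l * ε ^ (l + 1) * (Real.sqrt (1 - ε ^ 2))⁻¹ *
          ∫ u in Set.Ioo (0:ℝ) 1, gFun l u := by rw [← hcv]


/-- `|Q_ℓ(cosh β)| ≤ √π · (Γ(ℓ+1)/Γ(ℓ+3/2)) · e^{−β(ℓ+1)} · (1 − e^{−2β})^{−1/2}`. -/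
theorem legendreQ_cosh_bound (l : ℕ) (β : ℝ) (hβ : 0 < β) :
    |legendreQ l (Real.cosh β)| ≤
      Real.sqrt Real.pi * (Real.Gamma ((l : ℝ) + 1) / Real.Gamma ((l : ℝ) + 3 / 2)) *
        Real.exp (-β * ((l : ℝ) + 1)) * (1 - Real.exp (-2 * β)) ^ (-(1 / 2) : ℝ) := by
  set ε := Real.exp (-β) with hεdef
  set c := Real.cosh β with hcdef
  have hε : 0 < ε := Real.exp_pos _
  have hε1 : ε < 1 := Real.exp_lt_one_iff.mpr (by linarith)
  have hexp1 : ε * Real.exp β = 1 := by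
    rw [hεdef, ← Real.exp_add]; simp
  have hc : 2 * ε * c = 1 + ε ^ 2 := by
    rw [hcdef, Real.cosh_eq]
    nlinarith [hexp1]
  have hc1 : 1 < c := by nlinarith [sq_nonneg (1 - ε)]
  have hctpos : ∀ t : ℝ, t ≤ 1 → 0 < c - t := fun t ht => by linarith
  have hFcont : ContinuousOn (fun t : ℝ => (1 - t ^ 2) ^ l * ((c - t) ^ (l + 1))⁻¹)
      (Set.Icc (-1:ℝ) 1) := by
    apply ContinuousOn.mul (by fun_prop)
    exact ContinuousOn.inv₀ (by fun_prop)
      (fun t ht => pow_ne_zero _ (hctpos t ht.2).ne')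
  have hi1 : IntervalIntegrable (fun t : ℝ => (1 - t ^ 2) ^ l * ((c - t) ^ (l + 1))⁻¹)
      volume (-1) ε := by
    apply ContinuousOn.intervalIntegrable
    apply hFcont.mono
    rw [Set.uIcc_of_le (by linarith)]
    exact Set.Icc_subset_Icc le_rfl hε1.le
  have hi2 : IntervalIntegrable (fun t : ℝ => (1 - t ^ 2) ^ l * ((c - t) ^ (l + 1))⁻¹)
      volume ε 1 := by
    apply ContinuousOn.intervalIntegrable
    apply hFcont.mono
    rw [Set.uIcc_of_le (by linarith)]
    exact Set.Icc_subset_Icc (by linarith) le_rfl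
  have hsplit := intervalIntegral.integral_add_adjacent_intervals hi1 hi2
  have hQ := legendreQ_eq l hc1
  have hQnn : 0 ≤ legendreQ l c := by
    rw [hQ]
    apply mul_nonneg (by positivity)
    apply intervalIntegral.integral_nonneg (by norm_num)
    intro u hu
    have h1 : (0:ℝ) ≤ 1 - u ^ 2 := by nlinarith [hu.1, hu.2]
    have h2 : (0:ℝ) < c - u := hctpos u hu.2
    positivity
  have hIoo1 : (∫ t in (-1:ℝ)..ε, (1 - t ^ 2) ^ l * ((c - t) ^ (l + 1))⁻¹) =
      ∫ t in Set.Ioo (-1:ℝ) ε, (1 - t ^ 2) ^ l * ((c - t) ^ (l + 1))⁻¹ := by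
    rw [intervalIntegral.integral_of_le (by linarith), integral_Ioc_eq_integral_Ioo]
  have hIoo2 : (∫ t in ε..(1:ℝ), (1 - t ^ 2) ^ l * ((c - t) ^ (l + 1))⁻¹) =
      ∫ t in Set.Ioo ε (1:ℝ), (1 - t ^ 2) ^ l * ((c - t) ^ (l + 1))⁻¹ := by
    rw [intervalIntegral.integral_of_le (by linarith), integral_Ioc_eq_integral_Ioo]
  have hB : (∫ u in Set.Ioo (0:ℝ) 1, gFun l u) =
      Real.Gamma ((l:ℝ) + 1) * Real.sqrt Real.pi / Real.Gamma ((l:ℝ) + 3/2) := by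
    rw [← beta_val l, intervalIntegral.integral_of_le (by norm_num),
      integral_Ioc_eq_integral_Ioo]
    rfl
  set B : ℝ := Real.Gamma ((l:ℝ) + 1) * Real.sqrt Real.pi / Real.Gamma ((l:ℝ) + 3/2) with hBdef
  have hBnn : 0 ≤ B := by
    rw [hBdef]
    have h1 : 0 < Real.Gamma ((l:ℝ) + 1) := Real.Gamma_pos_of_pos (by positivity)
    have h2 : 0 < Real.Gamma ((l:ℝ) + 3/2) := Real.Gamma_pos_of_pos (by positivity)
    positivity
  have hmain : legendreQ l c ≤ ε ^ (l + 1) * (Real.sqrt (1 - ε ^ 2))⁻¹ * B := by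
    rw [hQ, ← hsplit, hIoo1, hIoo2]
    have hbl := branch_left l hε hε1 hc
    have hbr := branch_right l hε hε1 hc
    rw [hB] at hbl hbr
    calc ((2:ℝ) ^ (l + 1))⁻¹ *
        ((∫ t in Set.Ioo (-1:ℝ) ε, (1 - t ^ 2) ^ l * ((c - t) ^ (l + 1))⁻¹) +
          ∫ t in Set.Ioo ε (1:ℝ), (1 - t ^ 2) ^ l * ((c - t) ^ (l + 1))⁻¹)
        ≤ ((2:ℝ) ^ (l + 1))⁻¹ *
            (2 ^ l * ε ^ (l + 1) * (Real.sqrt (1 - ε ^ 2))⁻¹ * B +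
              2 ^ l * ε ^ (l + 1) * (Real.sqrt (1 - ε ^ 2))⁻¹ * B) := by
          apply mul_le_mul_of_nonneg_left (add_le_add hbl hbr) (by positivity)
      _ = ε ^ (l + 1) * (Real.sqrt (1 - ε ^ 2))⁻¹ * B := by
          have h1 : ((2:ℝ) ^ (l + 1))⁻¹ *
              (2 ^ l * ε ^ (l + 1) * (Real.sqrt (1 - ε ^ 2))⁻¹ * B +
                2 ^ l * ε ^ (l + 1) * (Real.sqrt (1 - ε ^ 2))⁻¹ * B)
              = ((2:ℝ) ^ (l + 1))⁻¹ * ((2:ℝ) ^ (l + 1) *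
                  (ε ^ (l + 1) * (Real.sqrt (1 - ε ^ 2))⁻¹ * B)) := by
            rw [pow_succ]; ring
          rw [h1, ← mul_assoc, inv_mul_cancel₀ (by positivity), one_mul]
  have hε2 : ε ^ 2 = Real.exp (-2 * β) := by
    rw [hεdef, sq, ← Real.exp_add]; ring_nf
  have hε2lt : ε ^ 2 < 1 := by nlinarith
  have hKrw : (1 - Real.exp (-2 * β)) ^ (-(1/2) : ℝ) = (Real.sqrt (1 - ε ^ 2))⁻¹ := by
    rw [← hε2, rpow_neg_half_eq (by linarith)]
  have hexprw : Real.exp (-β * ((l : ℝ) + 1)) = ε ^ (l + 1) := by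
    rw [show -β * ((l : ℝ) + 1) = ((l + 1 : ℕ) : ℝ) * (-β) by push_cast; ring,
      Real.exp_nat_mul, ← hεdef]
  rw [abs_of_nonneg hQnn]
  calc legendreQ l c ≤ ε ^ (l + 1) * (Real.sqrt (1 - ε ^ 2))⁻¹ * B := hmain
    _ = Real.sqrt Real.pi * (Real.Gamma ((l : ℝ) + 1) / Real.Gamma ((l : ℝ) + 3 / 2)) *
        Real.exp (-β * ((l : ℝ) + 1)) * (1 - Real.exp (-2 * β)) ^ (-(1 / 2) : ℝ) := by
      rw [hKrw, hexprw, hBdef]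
      ring
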